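/- Let (X_k)_{k≥0} be a stationary zero-mean process with summable correlations as above and suppose the limiting variance Σ² = 0. Then the partial sums Z_N = Σ_{k=0}^{N-1} X_k are uniformly bounded in L²: sup_N E(Z_N²) ≤ 2N Σ_{n≥N} |E(X_0 X_n)| + 2 Σ_{n=1}^{N-1} n |E(X_0 X_n)| ≤ C < ∞. -/

import Mathlib

open MeasureTheory Finset

private lemma doubleSum13 (r : ℕ → ℝ) (N : ℕ) :
    ∑ j ∈ range N, ∑ k ∈ range N, r (max j k - min j k)
      = N * r 0 + 2 * ∑ j ∈ range N, ((N : ℝ) - (j + 1)) * r (j + 1) := by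
  induction N with
  | zero => simp
  | succ N ih =>
    have hrefl : ∑ j ∈ range N, r (N - j) = ∑ j ∈ range N, r (j + 1) := by
      rw [← Finset.sum_range_reflect (fun j => r (j + 1)) N]
      exact Finset.sum_congr rfl fun j hj => by
        have := Finset.mem_range.mp hj
        congr 1
        omega
    have hinner : ∀ j ∈ range N,
        ∑ k ∈ range (N + 1), r (max j k - min j k)
          = (∑ k ∈ range N, r (max j k - min j k)) + r (N - j) := by
      intro j hj
      have hjN : j ≤ N := (Finset.mem_range.mp hj).le
      rw [Finset.sum_range_succ, max_eq_right hjN, min_eq_left hjN]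
    have hlast : ∑ k ∈ range (N + 1), r (max N k - min N k)
        = (∑ k ∈ range N, r (k + 1)) + r 0 := by
      rw [Finset.sum_range_succ, max_self, min_self, Nat.sub_self, ← hrefl]
      congr 1
      refine Finset.sum_congr rfl fun k hk => ?_
      have hkN : k ≤ N := (Finset.mem_range.mp hk).le
      rw [max_eq_left hkN, min_eq_right hkN]
    have hBsucc : ∑ j ∈ range (N + 1), (((N : ℝ) + 1) - (j + 1)) * r (j + 1)
        = (∑ j ∈ range N, ((N : ℝ) - (j + 1)) * r (j + 1)) + ∑ j ∈ range N, r (j + 1) := by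
      rw [Finset.sum_range_succ, ← Finset.sum_add_distrib]
      rw [show ∑ j ∈ range N, (((N : ℝ) + 1) - (j + 1)) * r (j + 1)
            = ∑ j ∈ range N, (((N : ℝ) - (j + 1)) * r (j + 1) + r (j + 1)) from
          Finset.sum_congr rfl fun j _ => by ring]
      ring
    calc ∑ j ∈ range (N + 1), ∑ k ∈ range (N + 1), r (max j k - min j k)
        = (∑ j ∈ range N, ((∑ k ∈ range N, r (max j k - min j k)) + r (N - j)))
            + ((∑ k ∈ range N, r (k + 1)) + r 0) := by
          rw [Finset.sum_range_succ, Finset.sum_congr rfl hinner, hlast]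
      _ = (∑ j ∈ range N, ∑ k ∈ range N, r (max j k - min j k))
            + ∑ j ∈ range N, r (j + 1) + ((∑ k ∈ range N, r (k + 1)) + r 0) := by
          rw [Finset.sum_add_distrib, hrefl]
      _ = (N : ℝ) * r 0 + 2 * ∑ j ∈ range N, ((N : ℝ) - (j + 1)) * r (j + 1)
            + ∑ j ∈ range N, r (j + 1) + ((∑ k ∈ range N, r (k + 1)) + r 0) := by rw [ih]
      _ = ((N + 1 : ℕ) : ℝ) * r 0
            + 2 * ∑ j ∈ range (N + 1), (((N + 1 : ℕ) : ℝ) - (j + 1)) * r (j + 1) := by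
          push_cast
          rw [hBsucc]
          ring

/-- If moreover the limiting variance vanishes, the partial sums `Z_N = ∑_{k<N} X_k`
are uniformly bounded in `L²`, with the explicit bound
`E(Z_N²) ≤ 2N ∑_{n≥N} |E(X₀X_n)| + 2 ∑_{n=1}^{N-1} n |E(X₀X_n)| ≤ C' < ∞`. -/
theorem stmt13 {Ω : Type*} [MeasurableSpace Ω] (μ : Measure Ω) [IsProbabilityMeasure μ]
    (X : ℕ → Ω → ℝ) (hL2 : ∀ k, MemLp (X k) 2 μ)
    (hmean : ∀ k, ∫ x, X k x ∂μ = 0)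
    (hstat : ∀ j k : ℕ, ∫ x, X j x * X (j + k) x ∂μ = ∫ x, X 0 x * X k x ∂μ)
    (C θ : ℝ) (hC : 0 < C) (hθ0 : 0 < θ) (hθ1 : θ < 1)
    (hdecay : ∀ n : ℕ, |∫ x, X 0 x * X n x ∂μ| ≤ C * θ ^ n)
    (hzero : (∫ x, (X 0 x) ^ 2 ∂μ) + 2 * ∑' n : ℕ, ∫ x, X 0 x * X (n + 1) x ∂μ = 0) :
    (∀ N : ℕ,
      ∫ x, (∑ k ∈ Finset.range N, X k x) ^ 2 ∂μ
        ≤ 2 * N * (∑' n : ℕ, |∫ x, X 0 x * X (N + n) x ∂μ|)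
          + 2 * ∑ n ∈ Finset.range N, n * |∫ x, X 0 x * X n x ∂μ|) ∧
    ∃ C' : ℝ, ∀ N : ℕ, ∫ x, (∑ k ∈ Finset.range N, X k x) ^ 2 ∂μ ≤ C' := by
  set r : ℕ → ℝ := fun n => ∫ x, X 0 x * X n x ∂μ with hr
  have hθnn : (0:ℝ) ≤ θ := hθ0.le
  have h1θ : (0:ℝ) < 1 - θ := by linarith
  -- integrability of products
  have hint : ∀ j k : ℕ, Integrable (fun x => X j x * X k x) μ := by
    intro j k
    refine Integrable.mono' ((hL2 j).integrable_sq.add (hL2 k).integrable_sq)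
      ((hL2 j).aestronglyMeasurable.mul (hL2 k).aestronglyMeasurable)
      (Filter.Eventually.of_forall fun x => ?_)
    rw [Real.norm_eq_abs, abs_mul]
    simp only [Pi.add_apply]
    nlinarith [sq_nonneg (|X j x| - |X k x|), sq_abs (X j x), sq_abs (X k x),
      abs_nonneg (X j x), abs_nonneg (X k x)]
  -- stationarity in symmetric form
  have hXjk : ∀ j k : ℕ, ∫ x, X j x * X k x ∂μ = r (max j k - min j k) := by
    intro j k
    rcases le_total j k with h | h
    · have h2 := hstat j (k - j)
      rw [Nat.add_sub_cancel' h] at h2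
      rw [h2, max_eq_right h, min_eq_left h]
    · have h2 := hstat k (j - k)
      rw [Nat.add_sub_cancel' h] at h2
      rw [max_eq_left h, min_eq_right h]
      rw [show r (j - k) = ∫ x, X 0 x * X (j - k) x ∂μ from rfl, ← h2]
      exact integral_congr_ae (Filter.Eventually.of_forall fun x => mul_comm _ _)
  -- the second moment identity
  have key : ∀ N : ℕ, ∫ x, (∑ k ∈ Finset.range N, X k x) ^ 2 ∂μ
      = N * r 0 + 2 * ∑ j ∈ range N, ((N : ℝ) - (j + 1)) * r (j + 1) := by
    intro N
    have hexp : ∀ x : Ω, (∑ k ∈ Finset.range N, X k x) ^ 2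
        = ∑ j ∈ range N, ∑ k ∈ range N, X j x * X k x := by
      intro x
      rw [sq, Finset.sum_mul_sum]
    calc ∫ x, (∑ k ∈ Finset.range N, X k x) ^ 2 ∂μ
        = ∫ x, ∑ j ∈ range N, ∑ k ∈ range N, X j x * X k x ∂μ := by
          exact integral_congr_ae (Filter.Eventually.of_forall fun x => hexp x)
      _ = ∑ j ∈ range N, ∫ x, ∑ k ∈ range N, X j x * X k x ∂μ :=
          integral_finset_sum _ (fun j _ => integrable_finset_sum _ fun k _ => hint j k)
      _ = ∑ j ∈ range N, ∑ k ∈ range N, ∫ x, X j x * X k x ∂μ :=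
          Finset.sum_congr rfl fun j _ => integral_finset_sum _ fun k _ => hint j k
      _ = ∑ j ∈ range N, ∑ k ∈ range N, r (max j k - min j k) :=
          Finset.sum_congr rfl fun j _ => Finset.sum_congr rfl fun k _ => hXjk j k
      _ = N * r 0 + 2 * ∑ j ∈ range N, ((N : ℝ) - (j + 1)) * r (j + 1) := doubleSum13 r N
  -- summability
  have hsummaux : ∀ m : ℕ, Summable (fun n : ℕ => C * θ ^ (m + n)) := by
    intro m
    simpa [pow_add, mul_assoc] using ((summable_geometric_of_lt_one hθnn hθ1).mul_left (C * θ ^ m))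
  have hsumabs : ∀ m : ℕ, Summable (fun n : ℕ => |r (m + n)|) := by
    intro m
    exact (hsummaux m).of_nonneg_of_le (fun n => abs_nonneg _) (fun n => hdecay (m + n))
  have hsum1 : Summable (fun n : ℕ => r (n + 1)) := by
    refine Summable.of_abs ?_
    refine Summable.of_nonneg_of_le (fun n => abs_nonneg _) (fun n => hdecay (n + 1)) ?_
    simpa [pow_add, pow_succ, mul_comm, mul_assoc, mul_left_comm] using
      ((summable_geometric_of_lt_one hθnn hθ1).mul_left (C * θ))
  have hr0 : r 0 = -2 * ∑' n : ℕ, r (n + 1) := by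
    have h00 : ∫ x, (X 0 x) ^ 2 ∂μ = r 0 := by
      simp_rw [sq]
      rfl
    rw [h00] at hzero
    linarith [hzero]
  -- tail bound on tsum
  have htail_abs_le : ∀ N : ℕ, (∑' n : ℕ, |r (N + n)|) ≤ C * θ ^ N * (1 - θ)⁻¹ := by
    intro N
    have := Summable.tsum_le_tsum (fun n => hdecay (N + n)) (hsumabs N) (hsummaux N)
    calc (∑' n : ℕ, |r (N + n)|) ≤ ∑' n : ℕ, C * θ ^ (N + n) := this
      _ = C * θ ^ N * (1 - θ)⁻¹ := by
          simp_rw [pow_add, ← mul_assoc]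
          rw [tsum_mul_left, tsum_geometric_of_lt_one hθnn hθ1]
  -- main inequality
  have main : ∀ N : ℕ,
      ∫ x, (∑ k ∈ Finset.range N, X k x) ^ 2 ∂μ
        ≤ 2 * N * (∑' n : ℕ, |r (N + n)|) + 2 * ∑ n ∈ Finset.range N, n * |r n| := by
    intro N
    rcases Nat.eq_zero_or_pos N with hN | hN
    · subst hN
      simp
    · obtain ⟨M, rfl⟩ : ∃ M, N = M + 1 := ⟨N - 1, by omega⟩
      set N := M + 1
      -- split the tsum
      have hsplit : (∑ i ∈ range M, r (i + 1)) + ∑' i : ℕ, r (i + M + 1) = ∑' n : ℕ, r (n + 1) :=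
        Summable.sum_add_tsum_nat_add M hsum1
      have htails : (∑' i : ℕ, r (i + M + 1)) = ∑' i : ℕ, r (N + i) := by
        refine tsum_congr fun i => ?_
        congr 1
        omega
      -- rewrite r 0
      have hr0' : (N : ℝ) * r 0
          = -2 * N * (∑' i : ℕ, r (N + i)) - 2 * N * ∑ i ∈ range M, r (i + 1) := by
        rw [hr0, ← hsplit, htails]
        ring
      -- shrink B sum: last term is zero
      have hB : ∑ j ∈ range N, ((N : ℝ) - (j + 1)) * r (j + 1)
          = ∑ j ∈ range M, ((N : ℝ) - (j + 1)) * r (j + 1) := by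
        rw [Finset.sum_range_succ]
        have : ((N : ℝ) - ((M : ℝ) + 1)) = 0 := by push_cast [N]; ring
        push_cast
        push_cast at this
        rw [this]
        ring
      rw [key, hr0', hB]
      have hcombine : -2 * (N : ℝ) * (∑ i ∈ range M, r (i + 1))
            + 2 * ∑ j ∈ range M, ((N : ℝ) - (j + 1)) * r (j + 1)
          = -2 * ∑ j ∈ range M, ((j : ℝ) + 1) * r (j + 1) := by
        rw [Finset.mul_sum, Finset.mul_sum, Finset.mul_sum, ← Finset.sum_add_distrib]
        exact Finset.sum_congr rfl fun j _ => by ring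
      have hsum_eq : ∑ n ∈ Finset.range N, (n : ℝ) * |r n|
          = ∑ j ∈ range M, ((j : ℝ) + 1) * |r (j + 1)| := by
        rw [Finset.sum_range_succ']
        push_cast
        simp
      have h1 : -2 * (N : ℝ) * (∑' i : ℕ, r (N + i)) ≤ 2 * N * (∑' n : ℕ, |r (N + n)|) := by
        have habs : |∑' i : ℕ, r (N + i)| ≤ ∑' n : ℕ, |r (N + n)| := by
          simpa using norm_tsum_le_tsum_norm (f := fun i => r (N + i)) (by simpa using hsumabs N)
        have hNnn : (0:ℝ) ≤ 2 * N := by positivity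
        calc -2 * (N : ℝ) * (∑' i : ℕ, r (N + i)) ≤ 2 * N * |∑' i : ℕ, r (N + i)| := by
              rw [show -2 * (N : ℝ) * (∑' i : ℕ, r (N + i)) = 2 * N * (-(∑' i : ℕ, r (N + i))) by
                ring]
              exact mul_le_mul_of_nonneg_left (neg_le_abs _) hNnn
          _ ≤ 2 * N * (∑' n : ℕ, |r (N + n)|) := mul_le_mul_of_nonneg_left habs hNnn
      have h2 : -2 * ∑ j ∈ range M, ((j : ℝ) + 1) * r (j + 1)
          ≤ 2 * ∑ j ∈ range M, ((j : ℝ) + 1) * |r (j + 1)| := by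
        rw [Finset.mul_sum, Finset.mul_sum]
        refine Finset.sum_le_sum fun j _ => ?_
        have : -(r (j + 1)) ≤ |r (j + 1)| := neg_le_abs _
        nlinarith [abs_nonneg (r (j + 1)), Nat.cast_nonneg (α := ℝ) j]
      calc -2 * (N : ℝ) * (∑' i : ℕ, r (N + i)) - 2 * N * (∑ i ∈ range M, r (i + 1))
            + 2 * ∑ j ∈ range M, ((N : ℝ) - (j + 1)) * r (j + 1)
          = -2 * (N : ℝ) * (∑' i : ℕ, r (N + i))
            + (-2 * (N : ℝ) * (∑ i ∈ range M, r (i + 1))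
               + 2 * ∑ j ∈ range M, ((N : ℝ) - (j + 1)) * r (j + 1)) := by ring
        _ = -2 * (N : ℝ) * (∑' i : ℕ, r (N + i))
            + -2 * ∑ j ∈ range M, ((j : ℝ) + 1) * r (j + 1) := by rw [hcombine]
        _ ≤ 2 * N * (∑' n : ℕ, |r (N + n)|) + 2 * ∑ j ∈ range M, ((j : ℝ) + 1) * |r (j + 1)| :=
            add_le_add h1 h2
        _ = 2 * N * (∑' n : ℕ, |r (N + n)|) + 2 * ∑ n ∈ Finset.range N, (n : ℝ) * |r n| := by
            rw [hsum_eq]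
  refine ⟨fun N => by simpa using main N, ?_⟩
  -- uniform bound
  refine ⟨2 * (C * (1 - θ)⁻¹ * (1 - θ)⁻¹) + 2 * (C * (θ / (1 - θ) ^ 2)), fun N => ?_⟩
  refine (main N).trans (add_le_add ?_ ?_)
  · -- 2 N tail ≤ 2 C (1-θ)⁻² using N θ^N ≤ (1-θ)⁻¹
    have hNθ : (N : ℝ) * θ ^ N ≤ (1 - θ)⁻¹ := by
      have h1 : (N : ℝ) * θ ^ N = ∑ k ∈ range N, θ ^ N := by
        rw [Finset.sum_const, card_range, nsmul_eq_mul]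
      have h2 : ∑ k ∈ range N, θ ^ N ≤ ∑ k ∈ range N, θ ^ k :=
        Finset.sum_le_sum fun k hk =>
          pow_le_pow_of_le_one hθnn hθ1.le (Finset.mem_range.mp hk).le
      have h3 : ∑ k ∈ range N, θ ^ k ≤ ∑' k : ℕ, θ ^ k :=
        Summable.sum_le_tsum _ (fun k _ => by positivity) (summable_geometric_of_lt_one hθnn hθ1)
      rw [tsum_geometric_of_lt_one hθnn hθ1] at h3
      linarith [h1 ▸ h2.trans h3]
    calc 2 * (N : ℝ) * (∑' n : ℕ, |r (N + n)|) ≤ 2 * N * (C * θ ^ N * (1 - θ)⁻¹) := by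
          refine mul_le_mul_of_nonneg_left (htail_abs_le N) (by positivity)
      _ = 2 * (C * (1 - θ)⁻¹) * ((N : ℝ) * θ ^ N) := by ring
      _ ≤ 2 * (C * (1 - θ)⁻¹) * (1 - θ)⁻¹ := by
          refine mul_le_mul_of_nonneg_left hNθ (by positivity)
      _ = 2 * (C * (1 - θ)⁻¹ * (1 - θ)⁻¹) := by ring
  · -- 2 ∑ n |r n| ≤ 2 C θ/(1-θ)²
    have hsummable : Summable (fun n : ℕ => (n : ℝ) * (C * θ ^ n)) := by
      have := summable_pow_mul_geometric_of_norm_lt_one (R := ℝ) 1 (r := θ)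
        (by rwa [Real.norm_eq_abs, abs_of_pos hθ0])
      simpa [pow_one, mul_comm, mul_assoc, mul_left_comm] using this.mul_left C
    have hstep : ∑ n ∈ range N, (n : ℝ) * |r n| ≤ ∑' n : ℕ, (n : ℝ) * (C * θ ^ n) := by
      refine (Finset.sum_le_sum fun n _ => ?_).trans
        (Summable.sum_le_tsum _ (fun n _ => by positivity) hsummable)
      exact mul_le_mul_of_nonneg_left (hdecay n) (Nat.cast_nonneg n)
    have htsum : ∑' n : ℕ, (n : ℝ) * (C * θ ^ n) = C * (θ / (1 - θ) ^ 2) := by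
      have := tsum_coe_mul_geometric_of_norm_lt_one (𝕜 := ℝ) (r := θ)
        (by rwa [Real.norm_eq_abs, abs_of_pos hθ0])
      calc ∑' n : ℕ, (n : ℝ) * (C * θ ^ n) = C * ∑' n : ℕ, (n : ℝ) * θ ^ n := by
            rw [← tsum_mul_left]
            exact tsum_congr fun n => by ring
        _ = C * (θ / (1 - θ) ^ 2) := by rw [this]
    have := hstep.trans_eq htsum
    linarith
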